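/- For a convex (supermodular) continuous capacity ν on a measurable space X, the Choquet integral is superlinear: for all measurable f, g : X → [0,∞] and α, β ≥ 0, ∮(αf + βg) dν ≥ α∮f dν + β∮g dν. -/

import Mathlib

open MeasureTheory
open scoped ENNReal NNReal

/-- The Choquet integral of `f : X → [0,∞]` against a set function `ν`:
`∮ f dν = ∫₀^∞ ν({x | f(x) > t}) dt`. -/
noncomputable def choquet {X : Type*} [MeasurableSpace X]
    (ν : Set X → ℝ≥0∞) (f : X → ℝ≥0∞) : ℝ≥0∞ :=
  ∫⁻ t in Set.Ioi (0 : ℝ), ν {x | ENNReal.ofReal t < f x}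

/-- `ν` is an (ω-)capacity on the Borel sets of `X`: it vanishes on `∅`, takes finite
values, is monotone, and is continuous along increasing sequences of measurable sets. -/
def IsCapacity {X : Type*} [MeasurableSpace X] (ν : Set X → ℝ≥0∞) : Prop :=
  ν ∅ = 0 ∧
  (∀ s : Set X, MeasurableSet s → ν s ≠ ∞) ∧
  (∀ s t : Set X, MeasurableSet s → MeasurableSet t → s ⊆ t → ν s ≤ ν t) ∧
  (∀ U : ℕ → Set X, (∀ n, MeasurableSet (U n)) → Monotone U →
    ν (⋃ n, U n) = ⨆ n, ν (U n))

section ChoquetProofAux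
open Set


variable {X : Type*} [MeasurableSpace X] {ν : Set X → ℝ≥0∞}

lemma level_meas {f : X → ℝ≥0∞} (hf : Measurable f) (t : ℝ) :
    MeasurableSet {x | ENNReal.ofReal t < f x} :=
  measurableSet_lt measurable_const hf

lemma choquet_anti (hν : IsCapacity ν) {f : X → ℝ≥0∞} (hf : Measurable f) :
    Antitone fun t : ℝ => ν {x | ENNReal.ofReal t < f x} := fun s t hst =>
  hν.2.2.1 _ _ (level_meas hf t) (level_meas hf s)
    (fun _ hx => lt_of_le_of_lt (ENNReal.ofReal_le_ofReal hst) hx)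

lemma choquet_mono (hν : IsCapacity ν) {f g : X → ℝ≥0∞} (hf : Measurable f)
    (hg : Measurable g) (h : ∀ x, f x ≤ g x) : choquet ν f ≤ choquet ν g :=
  lintegral_mono fun t =>
    hν.2.2.1 _ _ (level_meas hf t) (level_meas hg t) fun x hx => lt_of_lt_of_le hx (h x)

lemma lintegral_shift (H : ℝ → ℝ≥0∞) (c : ℝ) :
    ∫⁻ t in Ici c, H t = ∫⁻ t in Ici (0:ℝ), H (t + c) := by
  have h1 : MeasurePreserving (fun t : ℝ => t + c) volume volume :=
    measurePreserving_add_right volume c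
  have h2 : MeasurableEmbedding (fun t : ℝ => t + c) := measurableEmbedding_addRight c
  have := h1.setLIntegral_comp_preimage_emb h2 H (Ici c)
  rw [← this]
  congr 1
  ext t
  simp [le_add_iff_nonneg_left]

lemma lintegral_scale (H : ℝ → ℝ≥0∞) {a : ℝ} (ha : 0 < a) :
    ∫⁻ t in Ioi (0:ℝ), H (a * t) = ENNReal.ofReal a⁻¹ * ∫⁻ t in Ioi (0:ℝ), H t := by
  have h2 : MeasurableEmbedding (fun t : ℝ => a * t) :=
    (MeasurableEquiv.mulLeft₀ a (ne_of_gt ha)).measurableEmbedding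
  have hpre : (fun t : ℝ => a * t) ⁻¹' Ioi 0 = Ioi 0 := by
    ext t; simp [mul_pos_iff_of_pos_left, ha]
  calc ∫⁻ t in Ioi (0:ℝ), H (a * t) ∂volume
      = ∫⁻ t in (fun t : ℝ => a * t) ⁻¹' Ioi 0, H (a * t) ∂volume := by rw [hpre]
    _ = ∫⁻ s in Ioi (0:ℝ), H s ∂(Measure.map (a * ·) volume) := by
        rw [h2.restrict_map, h2.lintegral_map]
    _ = ENNReal.ofReal a⁻¹ * ∫⁻ t in Ioi (0:ℝ), H t := by
        rw [Real.map_volume_mul_left (ne_of_gt ha), Measure.restrict_smul,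
          lintegral_smul_measure, abs_of_pos (inv_pos.2 ha), smul_eq_mul]

lemma choquet_smul (hν : IsCapacity ν) {f : X → ℝ≥0∞} (hf : Measurable f) (α : ℝ≥0) :
    choquet ν (fun x => (α : ℝ≥0∞) * f x) = α * choquet ν f := by
  rcases eq_or_lt_of_le (zero_le : 0 ≤ α) with h0 | hpos
  · simp [choquet, ← h0, hν.1]
  · have hα0 : (α : ℝ≥0∞) ≠ 0 := by exact_mod_cast hpos.ne'
    have key : ∀ t : ℝ, {x | ENNReal.ofReal t < (α : ℝ≥0∞) * f x}
        = {x | ENNReal.ofReal ((α:ℝ)⁻¹ * t) < f x} := by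
      intro t
      ext x
      simp only [mem_setOf_eq]
      rw [inv_mul_eq_div, ENNReal.ofReal_div_of_pos (by exact_mod_cast hpos),
        ENNReal.ofReal_coe_nnreal, ENNReal.div_lt_iff (Or.inl hα0) (Or.inl ENNReal.coe_ne_top),
        mul_comm]
    show (∫⁻ t in Ioi (0:ℝ), ν {x | ENNReal.ofReal t < (α : ℝ≥0∞) * f x}) = _
    simp only [key]
    rw [lintegral_scale (fun s => ν {x | ENNReal.ofReal s < f x}) (by positivity : (0:ℝ) < (α:ℝ)⁻¹),
      inv_inv]
    rw [show ENNReal.ofReal (α:ℝ) = (α : ℝ≥0∞) from ENNReal.ofReal_coe_nnreal]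
    rfl



variable {X : Type*} [MeasurableSpace X] {ν : Set X → ℝ≥0∞}

lemma choquet_add_indicator (hν : IsCapacity ν)
    (hsuper : ∀ s t : Set X, MeasurableSet s → MeasurableSet t →
      ν s + ν t ≤ ν (s ∪ t) + ν (s ∩ t))
    {f : X → ℝ≥0∞} (hf : Measurable f) {B : Set X}
    (hB : MeasurableSet B) {c : ℝ≥0} (hc : 0 < c) :
    choquet ν f + c * ν B ≤
      choquet ν (fun x => f x + B.indicator (fun _ => (c : ℝ≥0∞)) x) := by
  have hfB : Measurable (fun x => f x + B.indicator (fun _ => (c : ℝ≥0∞)) x) :=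
    hf.add (measurable_const.indicator hB)
  by_cases hfin : choquet ν f = ∞
  · have : choquet ν (fun x => f x + B.indicator (fun _ => (c : ℝ≥0∞)) x) = ∞ :=
      top_le_iff.1 (hfin ▸ choquet_mono hν hf hfB (fun x => le_self_add))
    rw [this]; exact le_top
  -- notation
  set F : ℝ → ℝ≥0∞ := fun t => ν {x | ENNReal.ofReal t < f x} with hF
  set G : ℝ → ℝ≥0∞ := fun t => ν (B ∩ {x | ENNReal.ofReal t < f x + c}) with hG
  set FB : ℝ → ℝ≥0∞ := fun t => ν (B ∩ {x | ENNReal.ofReal t < f x}) with hFB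
  have hfc : Measurable (fun x => f x + (c : ℝ≥0∞)) := hf.add_const _
  have mS : ∀ t : ℝ, MeasurableSet {x | ENNReal.ofReal t < f x} := level_meas hf
  have mT : ∀ t : ℝ, MeasurableSet (B ∩ {x | ENNReal.ofReal t < f x + c}) :=
    fun t => hB.inter (level_meas hfc t)
  have mFB : ∀ t : ℝ, MeasurableSet (B ∩ {x | ENNReal.ofReal t < f x}) :=
    fun t => hB.inter (mS t)
  have setid : ∀ t : ℝ, {x | ENNReal.ofReal t < f x + B.indicator (fun _ => (c:ℝ≥0∞)) x}
      = {x | ENNReal.ofReal t < f x} ∪ (B ∩ {x | ENNReal.ofReal t < f x + c}) := by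
    intro t; ext x
    by_cases hx : x ∈ B
    · simp only [mem_setOf_eq, Set.indicator_of_mem hx, mem_union, mem_inter_iff, hx, true_and]
      exact ⟨Or.inr, fun h => h.elim (fun h' => h'.trans_le le_self_add) id⟩
    · simp [Set.indicator_of_notMem hx, hx]
  -- pointwise supermodularity
  have key : ∀ t : ℝ, F t + G t ≤
      ν ({x | ENNReal.ofReal t < f x} ∪ (B ∩ {x | ENNReal.ofReal t < f x + c})) + FB t := by
    intro t
    have hinter : {x | ENNReal.ofReal t < f x} ∩ (B ∩ {x | ENNReal.ofReal t < f x + c})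
        = B ∩ {x | ENNReal.ofReal t < f x} := by
      ext x
      simp only [mem_inter_iff, mem_setOf_eq]
      exact ⟨fun ⟨h1, h2, _⟩ => ⟨h2, h1⟩, fun ⟨h1, h2⟩ => ⟨h2, h1, h2.trans_le le_self_add⟩⟩
    have := hsuper _ _ (mS t) (mT t)
    rwa [hinter] at this
  -- antitonicity / measurability of integrands
  have hFanti : Antitone F := choquet_anti hν hf
  have hGanti : Antitone G := fun s t hst => hν.2.2.1 _ _ (mT t) (mT s)
    (inter_subset_inter_right _ (fun x hx => lt_of_le_of_lt (ENNReal.ofReal_le_ofReal hst) hx))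
  have hFBanti : Antitone FB := fun s t hst => hν.2.2.1 _ _ (mFB t) (mFB s)
    (inter_subset_inter_right _ (fun x hx => lt_of_le_of_lt (ENNReal.ofReal_le_ofReal hst) hx))
  have hcR : (0:ℝ) < (c:ℝ) := hc
  have hchoqF : choquet ν f = ∫⁻ t in Ioi (0:ℝ), F t := by rw [hF]; rfl
  -- the shift computation
  have hGsplit : ∫⁻ t in Ioi (0:ℝ), G t = ↑c * ν B + ∫⁻ t in Ioi (0:ℝ), FB t := by
    have hdisj : Disjoint (Ioo (0:ℝ) (c:ℝ)) (Ici (c:ℝ)) := by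
      rw [Set.disjoint_left]; intro t ht1 ht2; exact absurd ht2 (not_le.2 ht1.2)
    have hsplit0 : ∫⁻ t in Ioi (0:ℝ), G t
        = (∫⁻ t in Ioo (0:ℝ) (c:ℝ), G t) + ∫⁻ t in Ici (c:ℝ), G t := by
      rw [← Set.Ioo_union_Ici_eq_Ioi hcR]
      exact lintegral_union measurableSet_Ici hdisj
    have h1 : ∫⁻ t in Ioo (0:ℝ) (c:ℝ), G t = ↑c * ν B := by
      rw [setLIntegral_congr_fun measurableSet_Ioo
        (fun t (ht : t ∈ Ioo (0:ℝ) (c:ℝ)) => ?_), setLIntegral_const,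
        Real.volume_Ioo, sub_zero, ENNReal.ofReal_coe_nnreal, mul_comm]
      show ν (B ∩ {x | ENNReal.ofReal t < f x + c}) = ν B
      congr 1
      rw [inter_eq_self_of_subset_left]
      intro x _
      show ENNReal.ofReal t < f x + c
      calc ENNReal.ofReal t < ENNReal.ofReal (c:ℝ) :=
            (ENNReal.ofReal_lt_ofReal_iff hcR).2 ht.2
        _ = (c : ℝ≥0∞) := ENNReal.ofReal_coe_nnreal
        _ ≤ f x + c := le_add_self
    have h2 : ∫⁻ t in Ici (c:ℝ), G t = ∫⁻ t in Ioi (0:ℝ), FB t := by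
      rw [lintegral_shift G (c:ℝ)]
      have : ∫⁻ t in Ici (0:ℝ), G (t + c) = ∫⁻ t in Ici (0:ℝ), FB t := by
        refine setLIntegral_congr_fun measurableSet_Ici (fun t ht => ?_)
        show ν (B ∩ {x | ENNReal.ofReal (t + c) < f x + c}) = ν (B ∩ {x | ENNReal.ofReal t < f x})
        congr 1
        ext x
        simp only [mem_inter_iff, mem_setOf_eq, and_congr_right_iff]
        intro _
        rw [ENNReal.ofReal_add ht c.coe_nonneg, ENNReal.ofReal_coe_nnreal,
          ENNReal.add_lt_add_iff_right ENNReal.coe_ne_top]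
      rw [this]
      exact (setLIntegral_congr (Ioi_ae_eq_Ici (a := (0:ℝ)))).symm
    rw [hsplit0, h1, h2]
  -- FB integral is finite
  have hFBle : ∫⁻ t in Ioi (0:ℝ), FB t ≤ choquet ν f :=
    lintegral_mono fun t => hν.2.2.1 _ _ (mFB t) (mS t) inter_subset_right
  have hFBfin : ∫⁻ t in Ioi (0:ℝ), FB t ≠ ∞ := fun h => hfin (top_le_iff.1 (h ▸ hFBle))
  -- put it together
  have main : (choquet ν f + ↑c * ν B) + ∫⁻ t in Ioi (0:ℝ), FB t
      ≤ choquet ν (fun x => f x + B.indicator (fun _ => (c : ℝ≥0∞)) x)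
        + ∫⁻ t in Ioi (0:ℝ), FB t := by
    have hchq : choquet ν (fun x => f x + B.indicator (fun _ => (c : ℝ≥0∞)) x)
        = ∫⁻ t in Ioi (0:ℝ),
            ν ({x | ENNReal.ofReal t < f x} ∪ (B ∩ {x | ENNReal.ofReal t < f x + c})) := by
      show (∫⁻ t in Ioi (0:ℝ), ν {x | ENNReal.ofReal t < f x + B.indicator (fun _ => (c:ℝ≥0∞)) x}) = _
      simp only [setid]
    calc (choquet ν f + ↑c * ν B) + ∫⁻ t in Ioi (0:ℝ), FB t
        = choquet ν f + (↑c * ν B + ∫⁻ t in Ioi (0:ℝ), FB t) := by ring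
      _ = (∫⁻ t in Ioi (0:ℝ), F t) + ∫⁻ t in Ioi (0:ℝ), G t := by
          rw [← hGsplit, hchoqF]
      _ = ∫⁻ t in Ioi (0:ℝ), (F t + G t) :=
          (lintegral_add_left (μ := volume.restrict (Ioi (0:ℝ))) hFanti.measurable G).symm
      _ ≤ ∫⁻ t in Ioi (0:ℝ),
            (ν ({x | ENNReal.ofReal t < f x} ∪ (B ∩ {x | ENNReal.ofReal t < f x + c})) + FB t) :=
          lintegral_mono key
      _ = (∫⁻ t in Ioi (0:ℝ),
            ν ({x | ENNReal.ofReal t < f x} ∪ (B ∩ {x | ENNReal.ofReal t < f x + c})))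
          + ∫⁻ t in Ioi (0:ℝ), FB t := by
          refine lintegral_add_left (Antitone.measurable (fun s t hst => ?_)) _
          exact hν.2.2.1 _ _ ((mS t).union (mT t)) ((mS s).union (mT s))
            (union_subset_union
              (fun x hx => lt_of_le_of_lt (ENNReal.ofReal_le_ofReal hst) hx)
              (inter_subset_inter_right _
                (fun x hx => lt_of_le_of_lt (ENNReal.ofReal_le_ofReal hst) hx)))
      _ = _ := by rw [hchq]
  exact (ENNReal.add_le_add_iff_right hFBfin).1 main



lemma chain_lower (hν : IsCapacity ν)
    (hsuper : ∀ s t : Set X, MeasurableSet s → MeasurableSet t →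
      ν s + ν t ≤ ν (s ∪ t) + ν (s ∩ t))
    {f : X → ℝ≥0∞} (hf : Measurable f) {c : ℝ≥0} (hc : 0 < c)
    (B : ℕ → Set X) (hBm : ∀ k, MeasurableSet (B k)) (K : ℕ) :
    choquet ν f + ∑ k ∈ Finset.range K, ↑c * ν (B k)
      ≤ choquet ν (fun x => f x + ∑ k ∈ Finset.range K,
          (B k).indicator (fun _ => (c : ℝ≥0∞)) x) := by
  induction K with
  | zero => simp
  | succ K ih =>
    have hmeas : Measurable (fun x => f x + ∑ k ∈ Finset.range K,
        (B k).indicator (fun _ => (c : ℝ≥0∞)) x) :=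
      hf.add (Finset.measurable_sum _ fun k _ => measurable_const.indicator (hBm k))
    calc choquet ν f + ∑ k ∈ Finset.range (K+1), ↑c * ν (B k)
        = (choquet ν f + ∑ k ∈ Finset.range K, ↑c * ν (B k)) + ↑c * ν (B K) := by
          rw [Finset.sum_range_succ, add_assoc]
      _ ≤ choquet ν (fun x => f x + ∑ k ∈ Finset.range K,
            (B k).indicator (fun _ => (c : ℝ≥0∞)) x) + ↑c * ν (B K) :=
          add_le_add_left ih _
      _ ≤ choquet ν (fun x => (f x + ∑ k ∈ Finset.range K,
            (B k).indicator (fun _ => (c : ℝ≥0∞)) x)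
              + (B K).indicator (fun _ => (c : ℝ≥0∞)) x) :=
          choquet_add_indicator hν hsuper hmeas (hBm K) hc
      _ = _ := by
          congr 1
          funext x
          rw [Finset.sum_range_succ, add_assoc]

lemma chain_upper (hν : IsCapacity ν) {c : ℝ≥0} (hc : 0 < c) (K : ℕ) :
    ∀ (B : ℕ → Set X), (∀ k, MeasurableSet (B k)) → (∀ j k, j ≤ k → B k ⊆ B j) →
    choquet ν (fun x => ∑ k ∈ Finset.range K, (B k).indicator (fun _ => (c:ℝ≥0∞)) x)
      ≤ ∑ k ∈ Finset.range K, ↑c * ν (B k) := by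
  have hcR : (0:ℝ) < (c:ℝ) := hc
  induction K with
  | zero =>
    intro B hBm hBc
    have : ∀ t : ℝ, {x : X | ENNReal.ofReal t
        < ∑ k ∈ Finset.range 0, (B k).indicator (fun _ => (c:ℝ≥0∞)) x} = ∅ := by
      intro t; ext x; simp
    show (∫⁻ t in Ioi (0:ℝ), ν {x | ENNReal.ofReal t
        < ∑ k ∈ Finset.range 0, (B k).indicator (fun _ => (c:ℝ≥0∞)) x}) ≤ _
    simp [this, hν.1]
  | succ K ih =>
    intro B hBm hBc
    set h' : X → ℝ≥0∞ :=
      fun x => ∑ k ∈ Finset.range K, (B (k+1)).indicator (fun _ => (c:ℝ≥0∞)) x with hh'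
    set h : X → ℝ≥0∞ :=
      fun x => ∑ k ∈ Finset.range (K+1), (B k).indicator (fun _ => (c:ℝ≥0∞)) x with hh
    have hmeas : Measurable h :=
      Finset.measurable_sum _ fun k _ => measurable_const.indicator (hBm k)
    have hzero : ∀ x, x ∉ B 0 → h x = 0 := by
      intro x hx
      rw [hh]
      refine Finset.sum_eq_zero fun k _ => ?_
      exact Set.indicator_of_notMem (fun hmem => hx (hBc 0 k (Nat.zero_le k) hmem)) _
    have hsub : ∀ t : ℝ, {x | ENNReal.ofReal t < h x} ⊆ B 0 := by
      intro t x hx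
      by_contra hx0
      rw [mem_setOf_eq, hzero x hx0] at hx
      exact absurd hx (not_lt.2 zero_le)
    have hshift : ∀ t : ℝ, 0 ≤ t →
        {x | ENNReal.ofReal (t + c) < h x} = {x | ENNReal.ofReal t < h' x} := by
      intro t ht
      ext x
      by_cases hx : x ∈ B 0
      · have hx' : h x = h' x + c := by
          show (∑ k ∈ Finset.range (K+1), (B k).indicator (fun _ => (c:ℝ≥0∞)) x)
            = (∑ k ∈ Finset.range K, (B (k+1)).indicator (fun _ => (c:ℝ≥0∞)) x) + ↑c
          rw [Finset.sum_range_succ' _ K, Set.indicator_of_mem hx]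
        simp only [mem_setOf_eq, hx', ENNReal.ofReal_add ht c.coe_nonneg,
          ENNReal.ofReal_coe_nnreal, ENNReal.add_lt_add_iff_right ENNReal.coe_ne_top]
      · have h'0 : h' x = 0 := by
          rw [hh']
          refine Finset.sum_eq_zero fun k _ => ?_
          exact Set.indicator_of_notMem (fun hmem => hx (hBc 0 (k+1) (Nat.zero_le _) hmem)) _
        simp only [mem_setOf_eq, hzero x hx, h'0]
        exact ⟨fun hc' => absurd hc' (not_lt.2 zero_le),
          fun hc' => absurd hc' (not_lt.2 zero_le)⟩
    have hdisj : Disjoint (Ioo (0:ℝ) (c:ℝ)) (Ici (c:ℝ)) := by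
      rw [Set.disjoint_left]; intro t ht1 ht2; exact absurd ht2 (not_le.2 ht1.2)
    have hsplit0 : choquet ν h
        = (∫⁻ t in Ioo (0:ℝ) (c:ℝ), ν {x | ENNReal.ofReal t < h x})
          + ∫⁻ t in Ici (c:ℝ), ν {x | ENNReal.ofReal t < h x} := by
      show (∫⁻ t in Ioi (0:ℝ), ν {x | ENNReal.ofReal t < h x}) = _
      rw [← Set.Ioo_union_Ici_eq_Ioi hcR]
      exact lintegral_union measurableSet_Ici hdisj
    have hpart1 : (∫⁻ t in Ioo (0:ℝ) (c:ℝ), ν {x | ENNReal.ofReal t < h x}) ≤ ↑c * ν (B 0) := by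
      calc (∫⁻ t in Ioo (0:ℝ) (c:ℝ), ν {x | ENNReal.ofReal t < h x})
          ≤ ∫⁻ _ in Ioo (0:ℝ) (c:ℝ), ν (B 0) :=
            lintegral_mono fun t => hν.2.2.1 _ _ (level_meas hmeas t) (hBm 0) (hsub t)
        _ = ν (B 0) * volume (Ioo (0:ℝ) (c:ℝ)) := setLIntegral_const _ _
        _ = ↑c * ν (B 0) := by
            rw [Real.volume_Ioo, sub_zero, ENNReal.ofReal_coe_nnreal, mul_comm]
    have hpart2 : (∫⁻ t in Ici (c:ℝ), ν {x | ENNReal.ofReal t < h x})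
        ≤ ∑ k ∈ Finset.range K, ↑c * ν (B (k+1)) := by
      rw [lintegral_shift (fun t => ν {x | ENNReal.ofReal t < h x}) (c:ℝ)]
      have heq : ∫⁻ t in Ici (0:ℝ), ν {x | ENNReal.ofReal (t + c) < h x}
          = ∫⁻ t in Ici (0:ℝ), ν {x | ENNReal.ofReal t < h' x} := by
        refine setLIntegral_congr_fun measurableSet_Ici (fun t ht => ?_)
        rw [hshift t ht]
      rw [heq, ← setLIntegral_congr (Ioi_ae_eq_Ici (a := (0:ℝ)))]
      exact ih (fun k => B (k+1)) (fun k => hBm (k+1)) (fun j k hjk => hBc (j+1) (k+1) (by omega))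
    calc choquet ν h ≤ ↑c * ν (B 0) + ∑ k ∈ Finset.range K, ↑c * ν (B (k+1)) := by
          rw [hsplit0]; exact add_le_add hpart1 hpart2
      _ = ∑ k ∈ Finset.range (K+1), ↑c * ν (B k) := by
          rw [add_comm]
          exact (Finset.sum_range_succ' (fun k => (c:ℝ≥0∞) * ν (B k)) K).symm

lemma chain_approx (G : X → ℝ≥0∞) (c : ℝ≥0) (K : ℕ) (x : X) :
    ((∑ k ∈ Finset.range K,
        ({y | ((k:ℝ≥0∞)+1) * c ≤ G y}).indicator (fun _ => (c:ℝ≥0∞)) x) ≤ G x)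
    ∧ ((∑ k ∈ Finset.range K,
        ({y | ((k:ℝ≥0∞)+1) * c ≤ G y}).indicator (fun _ => (c:ℝ≥0∞)) x) = (K:ℝ≥0∞) * c
      ∨ G x < (∑ k ∈ Finset.range K,
        ({y | ((k:ℝ≥0∞)+1) * c ≤ G y}).indicator (fun _ => (c:ℝ≥0∞)) x) + c) := by
  induction K with
  | zero => simp
  | succ K ih =>
    by_cases hx : ((K:ℝ≥0∞)+1) * c ≤ G x
    · have hall : ∀ k ∈ Finset.range (K+1),
          ({y | ((k:ℝ≥0∞)+1) * c ≤ G y}).indicator (fun _ => (c:ℝ≥0∞)) x = c := by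
        intro k hk
        refine Set.indicator_of_mem ?_ _
        show ((k:ℝ≥0∞)+1) * c ≤ G x
        refine le_trans (mul_le_mul_left ?_ _) hx
        have : (k:ℝ≥0∞) ≤ (K:ℝ≥0∞) := by
          exact_mod_cast Nat.le_of_lt_succ (Finset.mem_range.1 hk)
        exact add_le_add_left this 1
      have hsum : (∑ k ∈ Finset.range (K+1),
          ({y | ((k:ℝ≥0∞)+1) * c ≤ G y}).indicator (fun _ => (c:ℝ≥0∞)) x)
          = ((K+1:ℕ):ℝ≥0∞) * c := by
        rw [Finset.sum_congr rfl hall, Finset.sum_const, Finset.card_range, nsmul_eq_mul]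
      constructor
      · rw [hsum]
        calc ((K+1:ℕ):ℝ≥0∞) * c = ((K:ℝ≥0∞)+1) * c := by push_cast; ring
          _ ≤ G x := hx
      · exact Or.inl hsum
    · have hxmem : x ∉ {y | ((K:ℝ≥0∞)+1) * c ≤ G y} := hx
      have hzero : ({y | ((K:ℝ≥0∞)+1) * c ≤ G y}).indicator (fun _ => (c:ℝ≥0∞)) x = 0 :=
        Set.indicator_of_notMem hxmem _
      rw [Finset.sum_range_succ, hzero, add_zero]
      refine ⟨ih.1, ?_⟩
      rcases ih.2 with h | h
      · right
        rw [h]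
        have : G x < ((K:ℝ≥0∞)+1) * c := lt_of_not_ge hx
        calc G x < ((K:ℝ≥0∞)+1) * c := this
          _ = (K:ℝ≥0∞) * c + c := by ring
      · exact Or.inr h

lemma lintegral_Ioi_eq_iSup_Ioo (H : ℝ → ℝ≥0∞) (hH : Measurable H) :
    ∫⁻ t in Ioi (0:ℝ), H t = ⨆ n : ℕ, ∫⁻ t in Ioo (0:ℝ) (n:ℝ), H t := by
  have key : ∀ t : ℝ, (Ioi (0:ℝ)).indicator H t
      = ⨆ n : ℕ, (Ioo (0:ℝ) (n:ℝ)).indicator H t := by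
    intro t
    by_cases ht : 0 < t
    · obtain ⟨n, hn⟩ := exists_nat_gt t
      rw [Set.indicator_of_mem (show t ∈ Ioi (0:ℝ) from ht) H]
      refine le_antisymm ?_ (iSup_le fun k => ?_)
      · exact le_iSup_of_le n (le_of_eq (Set.indicator_of_mem (show t ∈ Ioo (0:ℝ) (n:ℝ) from ⟨ht, hn⟩) H).symm)
      · by_cases hk : t ∈ Ioo (0:ℝ) (k:ℝ)
        · rw [Set.indicator_of_mem hk]
        · rw [Set.indicator_of_notMem hk]; exact zero_le
    · have h1 : t ∉ Ioi (0:ℝ) := ht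
      have h2 : ∀ k : ℕ, (Ioo (0:ℝ) (k:ℝ)).indicator H t = 0 :=
        fun k => Set.indicator_of_notMem (fun hk => ht hk.1) H
      rw [Set.indicator_of_notMem h1]
      simp [h2]
  calc ∫⁻ t in Ioi (0:ℝ), H t
      = ∫⁻ t, (Ioi (0:ℝ)).indicator H t := (lintegral_indicator measurableSet_Ioi H).symm
    _ = ∫⁻ t, ⨆ n : ℕ, (Ioo (0:ℝ) (n:ℝ)).indicator H t := by simp only [key]
    _ = ⨆ n : ℕ, ∫⁻ t, (Ioo (0:ℝ) (n:ℝ)).indicator H t := by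
        refine lintegral_iSup (fun n => hH.indicator measurableSet_Ioo) (fun i j hij => ?_)
        exact Set.indicator_le_indicator_of_subset
          (Ioo_subset_Ioo_right (by exact_mod_cast hij)) (fun _ => zero_le)
    _ = ⨆ n : ℕ, ∫⁻ t in Ioo (0:ℝ) (n:ℝ), H t := by
        simp only [lintegral_indicator measurableSet_Ioo]

lemma choquet_superadd (hν : IsCapacity ν)
    (hsuper : ∀ s t : Set X, MeasurableSet s → MeasurableSet t →
      ν s + ν t ≤ ν (s ∪ t) + ν (s ∩ t))
    {F G : X → ℝ≥0∞} (hF : Measurable F) (hG : Measurable G) :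
    choquet ν F + choquet ν G ≤ choquet ν (fun x => F x + G x) := by
  -- dyadic data
  set cn : ℕ → ℝ≥0 := fun n => ((2:ℝ≥0) ^ n)⁻¹ with hcn
  have hcn_pos : ∀ n, 0 < cn n := fun n => by positivity
  have hcn_anti : ∀ m n, m ≤ n → cn n ≤ cn m := by
    intro m n hmn
    exact inv_anti₀ (pow_pos two_pos m) (pow_le_pow_right₀ one_le_two hmn)
  set B : ℕ → ℕ → Set X := fun n k => {y | ((k:ℝ≥0∞)+1) * (cn n : ℝ≥0∞) ≤ G y} with hB
  have hBm : ∀ n k, MeasurableSet (B n k) := by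
    intro n k
    simp only [hB]
    exact measurableSet_le measurable_const hG
  have hBc : ∀ n, ∀ j k, j ≤ k → B n k ⊆ B n j := by
    intro n j k hjk y hy
    simp only [hB, mem_setOf_eq] at hy ⊢
    refine le_trans (mul_le_mul_left ?_ _) hy
    exact add_le_add_left (by exact_mod_cast hjk) 1
  set Gn : ℕ → X → ℝ≥0∞ :=
    fun n x => ∑ k ∈ Finset.range (n * 2^n), (B n k).indicator (fun _ => (cn n : ℝ≥0∞)) x
    with hGn
  have hGnm : ∀ n, Measurable (Gn n) :=
    fun n => Finset.measurable_sum _ fun k _ => measurable_const.indicator (hBm n k)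
  have hGnle : ∀ n x, Gn n x ≤ G x := by
    intro n x
    simp only [hGn, hB]
    exact (chain_approx G (cn n) (n * 2^n) x).1
  -- the total value of the full chain is n
  have htot : ∀ n : ℕ, ((n * 2^n : ℕ) : ℝ≥0∞) * (cn n : ℝ≥0∞) = (n : ℝ≥0∞) := by
    intro n
    have hcoe : (cn n : ℝ≥0∞) = ((2:ℝ≥0∞) ^ n)⁻¹ := by
      rw [hcn]
      push_cast [ENNReal.coe_inv (by positivity : ((2:ℝ≥0) ^ n) ≠ 0)]
      norm_num
    rw [hcoe]
    push_cast
    rw [mul_assoc, ENNReal.mul_inv_cancel (pow_ne_zero _ two_ne_zero) (ENNReal.pow_ne_top ENNReal.ofNat_ne_top),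
      mul_one]
  -- pointwise comparison
  have hpt : ∀ (N : ℕ) (t : ℝ), 0 < t → t < N →
      {x | ENNReal.ofReal (t + (cn N : ℝ)) < G x} ⊆ {x | ENNReal.ofReal t < Gn N x} := by
    intro N t ht htN x hx
    rcases (chain_approx G (cn N) (N * 2^N) x).2 with h | h
    · show ENNReal.ofReal t < Gn N x
      simp only [hGn, hB]
      rw [h, htot N]
      calc ENNReal.ofReal t < ENNReal.ofReal (N:ℝ) :=
            (ENNReal.ofReal_lt_ofReal_iff (ht.trans htN)).2 htN
        _ = (N : ℝ≥0∞) := ENNReal.ofReal_natCast N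
    · have h1 : ENNReal.ofReal t + (cn N : ℝ≥0∞) < G x := by
        rw [← ENNReal.ofReal_coe_nnreal, ← ENNReal.ofReal_add ht.le (cn N).coe_nonneg]
        exact hx
      have h2 := h1.trans h
      exact (ENNReal.add_lt_add_iff_right ENNReal.coe_ne_top).1 h2
  -- antitone integrands
  have hanti : ∀ c : ℝ≥0, Antitone fun t : ℝ => ν {x | ENNReal.ofReal (t + (c:ℝ)) < G x} := by
    intro c s t hst
    refine hν.2.2.1 _ _ (level_meas (hG) _) (level_meas (hG) _) ?_
    intro x hx
    exact lt_of_le_of_lt (ENNReal.ofReal_le_ofReal (by linarith)) hx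
  -- Step 1
  have step1 : ∀ m : ℕ,
      (∫⁻ t in Ioi (0:ℝ), ν {x | ENNReal.ofReal (t + (cn m : ℝ)) < G x})
        ≤ ⨆ n, choquet ν (Gn n) := by
    intro m
    rw [lintegral_Ioi_eq_iSup_Ioo _ (hanti (cn m)).measurable]
    refine iSup_le fun n => ?_
    set N := max n m with hN
    calc (∫⁻ t in Ioo (0:ℝ) (n:ℝ), ν {x | ENNReal.ofReal (t + (cn m : ℝ)) < G x})
        ≤ ∫⁻ t in Ioo (0:ℝ) (N:ℝ), ν {x | ENNReal.ofReal (t + (cn m : ℝ)) < G x} :=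
          lintegral_mono_set (Ioo_subset_Ioo_right (by exact_mod_cast le_max_left n m))
      _ ≤ ∫⁻ t in Ioo (0:ℝ) (N:ℝ), ν {x | ENNReal.ofReal t < Gn N x} := by
          refine setLIntegral_mono (choquet_anti hν (hGnm N)).measurable ?_
          intro t htm
          refine hν.2.2.1 _ _ (measurableSet_lt measurable_const hG)
            (level_meas (hGnm N) t) ?_
          refine subset_trans ?_ (hpt N t htm.1 htm.2)
          intro x hx
          refine lt_of_le_of_lt (ENNReal.ofReal_le_ofReal ?_) hx
          have := hcn_anti m N (le_max_right n m)
          exact add_le_add_right (by exact_mod_cast this) t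
      _ ≤ ∫⁻ t in Ioi (0:ℝ), ν {x | ENNReal.ofReal t < Gn N x} :=
          lintegral_mono_set Ioo_subset_Ioi_self
      _ = choquet ν (Gn N) := rfl
      _ ≤ ⨆ n, choquet ν (Gn n) := le_iSup (fun n => choquet ν (Gn n)) N
  -- Step 2
  have hmono_m : ∀ t : ℝ, Monotone fun m : ℕ => {x | ENNReal.ofReal (t + (cn m : ℝ)) < G x} := by
    intro t i j hij x hx
    refine lt_of_le_of_lt (ENNReal.ofReal_le_ofReal ?_) hx
    have := hcn_anti i j hij
    exact add_le_add_right (by exact_mod_cast this) t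
  have step2 : choquet ν G
      ≤ ⨆ m : ℕ, ∫⁻ t in Ioi (0:ℝ), ν {x | ENNReal.ofReal (t + (cn m : ℝ)) < G x} := by
    have hpw : ∀ t ∈ Ioi (0:ℝ), ν {x | ENNReal.ofReal t < G x}
        = ⨆ m : ℕ, ν {x | ENNReal.ofReal (t + (cn m : ℝ)) < G x} := by
      intro t ht
      rw [← hν.2.2.2 (fun m => {x | ENNReal.ofReal (t + (cn m : ℝ)) < G x})
        (fun m => measurableSet_lt measurable_const hG) (hmono_m t)]
      congr 1
      ext x
      simp only [mem_iUnion, mem_setOf_eq]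
      constructor
      · intro hx
        obtain ⟨r, hr0, hr⟩ := ENNReal.lt_iff_exists_add_pos_lt.1 hx
        obtain ⟨k, hk⟩ := exists_pow_lt_of_lt_one hr0 (by exact inv_lt_one_of_one_lt₀ one_lt_two : (2:ℝ≥0)⁻¹ < 1)
        refine ⟨k, ?_⟩
        have hcnk : cn k ≤ r := by
          rw [hcn]
          calc ((2:ℝ≥0) ^ k)⁻¹ = ((2:ℝ≥0)⁻¹) ^ k := (inv_pow 2 k).symm
            _ ≤ r := hk.le
        calc ENNReal.ofReal (t + (cn k : ℝ))
            = ENNReal.ofReal t + (cn k : ℝ≥0∞) := by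
              rw [ENNReal.ofReal_add (le_of_lt (mem_Ioi.1 ht)) (cn k).coe_nonneg,
                ENNReal.ofReal_coe_nnreal]
          _ ≤ ENNReal.ofReal t + (r : ℝ≥0∞) := add_le_add_right (by exact_mod_cast hcnk) _
          _ < G x := hr
      · rintro ⟨m, hm⟩
        refine lt_of_le_of_lt (ENNReal.ofReal_le_ofReal ?_) hm
        have : (0:ℝ) ≤ (cn m : ℝ) := (cn m).coe_nonneg
        linarith
    have hcongr : (∫⁻ t in Ioi (0:ℝ), ν {x | ENNReal.ofReal t < G x})
        = ∫⁻ t in Ioi (0:ℝ), ⨆ m : ℕ, ν {x | ENNReal.ofReal (t + (cn m : ℝ)) < G x} :=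
      setLIntegral_congr_fun measurableSet_Ioi hpw
    have hmonof : Monotone fun (m : ℕ) (t : ℝ) =>
        ν {x | ENNReal.ofReal (t + (cn m : ℝ)) < G x} := by
      intro i j hij t
      exact hν.2.2.1 _ _ (measurableSet_lt measurable_const hG)
        (measurableSet_lt measurable_const hG) (hmono_m t hij)
    show (∫⁻ t in Ioi (0:ℝ), ν {x | ENNReal.ofReal t < G x}) ≤ _
    rw [hcongr]
    exact le_of_eq (lintegral_iSup (fun m => (hanti (cn m)).measurable) hmonof)
  -- assemble
  have hGsup : choquet ν G ≤ ⨆ n, choquet ν (Gn n) := step2.trans (iSup_le step1)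
  calc choquet ν F + choquet ν G ≤ choquet ν F + ⨆ n, choquet ν (Gn n) :=
        add_le_add_right hGsup _
    _ = ⨆ n, (choquet ν F + choquet ν (Gn n)) := by
        rw [ENNReal.add_iSup]
    _ ≤ choquet ν (fun x => F x + G x) := by
        refine iSup_le fun n => ?_
        calc choquet ν F + choquet ν (Gn n)
            ≤ choquet ν F + ∑ k ∈ Finset.range (n * 2^n), ↑(cn n) * ν (B n k) :=
              add_le_add_right (chain_upper hν (hcn_pos n) (n * 2^n) (B n) (hBm n) (hBc n)) _
          _ ≤ choquet ν (fun x => F x + Gn n x) :=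
              chain_lower hν hsuper hF (hcn_pos n) (B n) (hBm n) (n * 2^n)
          _ ≤ choquet ν (fun x => F x + G x) := by
              refine choquet_mono hν (hF.add (hGnm n)) (hF.add hG) ?_
              intro x
              exact add_le_add_right (hGnle n x) _

end ChoquetProofAux

section Main
open Set

/-- For a convex (supermodular) continuous capacity, the Choquet integral is superlinear:
`∮ (αf + βg) dν ≥ α ∮f dν + β ∮g dν` for all measurable `f, g : X → [0,∞]` and all
scalars `α, β ≥ 0`. -/
theorem choquet_superlinear_of_supermodular {X : Type*} [MeasurableSpace X]
    (ν : Set X → ℝ≥0∞) (hν : IsCapacity ν)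
    (hsuper : ∀ s t : Set X, MeasurableSet s → MeasurableSet t →
      ν s + ν t ≤ ν (s ∪ t) + ν (s ∩ t))
    (f g : X → ℝ≥0∞) (hf : Measurable f) (hg : Measurable g) (α β : ℝ≥0) :
    α * choquet ν f + β * choquet ν g ≤
      choquet ν (fun x => α * f x + β * g x) := by
  calc (α : ℝ≥0∞) * choquet ν f + (β : ℝ≥0∞) * choquet ν g
      = choquet ν (fun x => (α : ℝ≥0∞) * f x) + choquet ν (fun x => (β : ℝ≥0∞) * g x) := by
        rw [choquet_smul hν hf α, choquet_smul hν hg β]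
    _ ≤ choquet ν (fun x => ↑α * f x + ↑β * g x) :=
        choquet_superadd hν hsuper (hf.const_mul _) (hg.const_mul _)


end Main
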